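/- arXiv:math/0309286 — 2 statements merged into one kernel-verified Lean document; each statement's English description precedes it below -/
import Mathlib

section
/- Let s ≥ 1. For every family (λ_Q)_{Q∈𝒟} of nonnegative real numbers indexed by the dyadic cubes of ℝ^n and every x ∈ ℝ^n, one has (∑_{Q∈𝒟} λ_Q χ_Q(x))^s ≤ s · ∑_{Q∈𝒟} λ_Q χ_Q(x) · (∑_{Q'∈𝒟, Q'⊆Q} λ_{Q'} χ_{Q'}(x))^{s−1}, where both sides take values in [0,∞]. -/
open MeasureTheory ENNReal Set
open scoped Classical ENNReal NNReal

noncomputable section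

/-- We model `ℝ^n` as `EuclideanSpace ℝ (Fin n)`. -/
abbrev Euc (n : ℕ) := EuclideanSpace ℝ (Fin n)

/-- Indices `(k, m)` of dyadic cubes in `ℝ^n`. -/
abbrev DIdx (n : ℕ) := ℤ × (Fin n → ℤ)

/-- The dyadic cube with index `q = (k, m)`, namely `2^{-k}(m + [0,1)^n)`. -/
def dCube (n : ℕ) (q : DIdx n) : Set (Euc n) :=
  {x | ∀ i, (q.2 i : ℝ) ≤ (2:ℝ) ^ q.1 * x i ∧ (2:ℝ) ^ q.1 * x i < (q.2 i : ℝ) + 1}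

/-- The side length of the dyadic cube of index `q = (k, m)` is `2^{-k}`. -/
def sideLen (n : ℕ) (q : DIdx n) : ℝ := (2:ℝ) ^ (-q.1)

/-- Characteristic function of a dyadic cube, with values in `ℝ≥0∞`. -/
def ch (n : ℕ) (q : DIdx n) (x : Euc n) : ℝ≥0∞ := (dCube n q).indicator 1 x

/-- `K̄(Q)(x) = σ(Q)⁻¹ ∑_{Q' ⊆ Q} K(Q') σ(Q') χ_{Q'}(x)`.
(Since `σ(Q') ≤ σ(Q)` for `Q' ⊆ Q`, this is automatically `0` when `σ(Q) = 0`,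
by the convention `∞ · 0 = 0` in `ℝ≥0∞`.) -/
def Kbar (n : ℕ) (σ : Measure (Euc n)) (K : DIdx n → ℝ≥0∞) (q : DIdx n) (x : Euc n) : ℝ≥0∞ :=
  (σ (dCube n q))⁻¹ *
    ∑' q' : DIdx n, if dCube n q' ⊆ dCube n q then K q' * σ (dCube n q') * ch n q' x else 0


lemma floor_scale' (d : ℕ) (t u : ℝ) (h : ⌊(2:ℝ)^d * t⌋ = ⌊(2:ℝ)^d * u⌋) : ⌊u⌋ = ⌊t⌋ := by
  have h2 : (0:ℝ) < 2 ^ d := by positivity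
  have hb1 : ((⌊t⌋ * 2 ^ d : ℤ) : ℝ) ≤ (2:ℝ) ^ d * t := by
    push_cast
    calc ((⌊t⌋ : ℝ) * 2 ^ d) ≤ t * 2 ^ d := by
          exact mul_le_mul_of_nonneg_right (Int.floor_le t) h2.le
      _ = 2 ^ d * t := by ring
  have hb2 : (2:ℝ) ^ d * t < ((⌊t⌋ + 1) * 2 ^ d : ℤ) := by
    push_cast
    calc (2:ℝ) ^ d * t = t * 2 ^ d := by ring
      _ < (⌊t⌋ + 1) * 2 ^ d := by
          exact mul_lt_mul_of_pos_right (Int.lt_floor_add_one t) h2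
  have m1 : (⌊t⌋ * 2 ^ d : ℤ) ≤ ⌊(2:ℝ)^d * u⌋ := h ▸ Int.le_floor.mpr hb1
  have m2 : ⌊(2:ℝ)^d * u⌋ < ((⌊t⌋ + 1) * 2 ^ d : ℤ) := h ▸ Int.floor_lt.mpr hb2
  have l1 : ((⌊t⌋ * 2 ^ d : ℤ) : ℝ) ≤ (2:ℝ)^d * u :=
    le_trans (by exact_mod_cast m1) (Int.floor_le _)
  have l2 : (2:ℝ)^d * u < ((⌊t⌋ + 1) * 2 ^ d : ℤ) := by
    calc (2:ℝ)^d * u < ⌊(2:ℝ)^d * u⌋ + 1 := Int.lt_floor_add_one _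
      _ ≤ ((⌊t⌋ + 1) * 2 ^ d : ℤ) := by exact_mod_cast m2
  refine Int.floor_eq_iff.mpr ⟨?_, ?_⟩
  · push_cast at l1 ⊢
    nlinarith
  · push_cast at l2 ⊢
    nlinarith

lemma real_step (b d s : ℝ) (hb : 0 ≤ b) (hd : 0 ≤ d) (hs : 1 ≤ s) :
    (b + d) ^ s ≤ b ^ s + s * (d * (b + d) ^ (s - 1)) := by
  have ha : 0 ≤ b + d := by linarith
  rcases eq_or_lt_of_le ha with h0 | h0
  · have hb0 : b = 0 := by linarith
    have hd0 : d = 0 := by linarith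
    subst hb0; subst hd0
    simp [Real.zero_rpow (by linarith : s ≠ 0)]
  · have hber : 1 + s * (b / (b + d) - 1) ≤ (b / (b + d)) ^ s := by
      have h1 : (-1 : ℝ) ≤ b / (b + d) - 1 := by
        have : 0 ≤ b / (b + d) := div_nonneg hb h0.le
        linarith
      have := one_add_mul_self_le_rpow_one_add h1 hs
      simpa using this
    have has : 0 < (b + d) ^ s := Real.rpow_pos_of_pos h0 s
    have hmul : (1 + s * (b / (b + d) - 1)) * (b + d) ^ s ≤ (b / (b + d)) ^ s * (b + d) ^ s :=
      mul_le_mul_of_nonneg_right hber has.le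
    have h2 : (b / (b + d)) ^ s * (b + d) ^ s = b ^ s := by
      rw [← Real.mul_rpow (div_nonneg hb h0.le) h0.le]
      rw [div_mul_cancel₀ _ (ne_of_gt h0)]
    have hpow : (b + d) ^ s = (b + d) * (b + d) ^ (s - 1) := by
      calc (b + d) ^ s = (b + d) ^ (1 + (s - 1)) := by norm_num
        _ = (b + d) * (b + d) ^ (s - 1) := by rw [Real.rpow_add h0, Real.rpow_one]
    have h3 : (b / (b + d)) * (b + d) ^ s = b * (b + d) ^ (s - 1) := by
      rw [hpow]
      field_simp
    have e1 : (1 + s * (b / (b + d) - 1)) * (b + d) ^ s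
        = (b + d) ^ s + s * (b / (b + d) * (b + d) ^ s) - s * (b + d) ^ s := by ring
    rw [e1, h3, h2, hpow] at hmul
    rw [hpow]
    nlinarith [hmul]

lemma stepE (b d : ℝ≥0∞) (hb : b ≠ ∞) (hd : d ≠ ∞) (s : ℝ) (hs : 1 ≤ s) :
    (b + d) ^ s ≤ b ^ s + ENNReal.ofReal s * (d * (b + d) ^ (s - 1)) := by
  have hs0 : (0:ℝ) ≤ s := by linarith
  have hs1 : (0:ℝ) ≤ s - 1 := by linarith
  have hB : b = ENNReal.ofReal b.toReal := (ENNReal.ofReal_toReal hb).symm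
  have hD : d = ENNReal.ofReal d.toReal := (ENNReal.ofReal_toReal hd).symm
  have hBn : 0 ≤ b.toReal := ENNReal.toReal_nonneg
  have hDn : 0 ≤ d.toReal := ENNReal.toReal_nonneg
  rw [hB, hD, ← ENNReal.ofReal_add hBn hDn,
    ENNReal.ofReal_rpow_of_nonneg (by linarith) hs0,
    ENNReal.ofReal_rpow_of_nonneg (by linarith) hs1,
    ENNReal.ofReal_rpow_of_nonneg hBn hs0,
    ← ENNReal.ofReal_mul hDn, ← ENNReal.ofReal_mul hs0, ← ENNReal.ofReal_add (by positivity)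
      (by positivity)]
  exact ENNReal.ofReal_le_ofReal (real_step _ _ _ hBn hDn hs)

lemma sum_Ico_succ_top_int {M : Type*} [AddCommMonoid M] (a b : ℤ) (h : a ≤ b) (f : ℤ → M) :
    ∑ k ∈ Finset.Ico a (b+1), f k = (∑ k ∈ Finset.Ico a b, f k) + f b := by
  have hins : Finset.Ico a (b+1) = insert b (Finset.Ico a b) := by
    ext k; simp only [Finset.mem_Ico, Finset.mem_insert]; omega
  rw [hins, Finset.sum_insert (by simp)]
  exact add_comm _ _

lemma L2 (s : ℝ) (hs : 1 ≤ s) (g : ℤ → ℝ≥0∞) :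
    (∑' k, g k) ^ s ≤
      ENNReal.ofReal s * ∑' k, g k * (∑' k', if k ≤ k' then g k' else 0) ^ (s - 1) := by
  have hs0 : (0:ℝ) < s := by linarith
  have hs1 : (0:ℝ) ≤ s - 1 := by linarith
  have hsne : s ≠ 0 := ne_of_gt hs0
  set S : ℤ → ℝ≥0∞ := fun k => ∑' k', if k ≤ k' then g k' else 0 with hS_def
  set T : ℝ≥0∞ := ∑' k, g k with hT_def
  have hone : (1:ℝ≥0∞) ≤ ENNReal.ofReal s := by
    rw [← ENNReal.ofReal_one]; exact ENNReal.ofReal_le_ofReal hs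
  have hgS : ∀ k, g k ≤ S k := by
    intro k
    have := ENNReal.le_tsum (f := fun k' => if k ≤ k' then g k' else 0) k
    simpa using this
  have hSucc : ∀ k, S k = g k + S (k + 1) := by
    intro k
    show (∑' k', if k ≤ k' then g k' else 0) = g k + ∑' k', if k + 1 ≤ k' then g k' else 0
    rw [ENNReal.tsum_eq_add_tsum_ite k]
    simp only [le_refl, if_true]
    congr 1
    apply tsum_congr
    intro k'
    rcases eq_or_ne k' k with rfl | hne
    · simp
    · simp only [hne, if_false]
      have : (k ≤ k' ∧ k' ≠ k) ↔ k + 1 ≤ k' := by omega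
      by_cases hk : k + 1 ≤ k'
      · rw [if_pos (by omega), if_pos hk]
      · rw [if_neg (by omega), if_neg hk]
  have hSanti : ∀ j k : ℤ, j ≤ k → S k ≤ S j := by
    intro j k hjk
    apply ENNReal.tsum_le_tsum
    intro k'
    by_cases h : k ≤ k'
    · rw [if_pos h, if_pos (le_trans hjk h)]
    · rw [if_neg h]; exact zero_le
  have hTS : ∀ k, S k ≤ T := by
    intro k
    apply ENNReal.tsum_le_tsum
    intro k'
    by_cases h : k ≤ k' <;> simp [h]
  have honeS : ∀ k, S k = ∞ → (1:ℝ≥0∞) ≤ S k ^ (s - 1) := by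
    intro k hk
    rw [hk]
    rcases eq_or_lt_of_le hs1 with h | h
    · rw [← h, ENNReal.rpow_zero]
    · rw [ENNReal.top_rpow_of_pos h]; exact le_top
  by_cases hfin : ∀ k, S k ≠ ∞
  · -- all finite: telescoping
    have hgfin : ∀ k, g k ≠ ∞ := fun k => ne_top_of_le_ne_top (hfin k) (hgS k)
    set R : ℝ≥0∞ := ∑' k, g k * S k ^ (s - 1) with hR_def
    have tele : ∀ N : ℕ, ∀ M : ℤ, -(N:ℤ) ≤ M →
        S (-(N:ℤ)) ^ s ≤ S M ^ s +
          ENNReal.ofReal s * ∑ k ∈ Finset.Ico (-(N:ℤ)) M, g k * S k ^ (s - 1) := by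
      intro N
      refine Int.le_induction ?_ ?_
      · simp
      · intro M hM ih
        have hstep : S M ^ s ≤ S (M+1) ^ s + ENNReal.ofReal s * (g M * S M ^ (s - 1)) := by
          have := stepE (S (M+1)) (g M) (hfin _) (hgfin _) s hs
          rw [add_comm (S (M+1)) (g M), ← hSucc M] at this
          exact this
        calc S (-(N:ℤ)) ^ s
            ≤ S M ^ s + ENNReal.ofReal s * ∑ k ∈ Finset.Ico (-(N:ℤ)) M, g k * S k ^ (s-1) := ih
          _ ≤ (S (M+1) ^ s + ENNReal.ofReal s * (g M * S M ^ (s - 1))) +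
              ENNReal.ofReal s * ∑ k ∈ Finset.Ico (-(N:ℤ)) M, g k * S k ^ (s-1) :=
              add_le_add_left hstep _
          _ = S (M+1) ^ s + ENNReal.ofReal s *
              (∑ k ∈ Finset.Ico (-(N:ℤ)) M, g k * S k ^ (s-1) + g M * S M ^ (s - 1)) := by
              rw [mul_add]; ring
          _ = S (M+1) ^ s + ENNReal.ofReal s *
              ∑ k ∈ Finset.Ico (-(N:ℤ)) (M+1), g k * S k ^ (s-1) := by
              rw [sum_Ico_succ_top_int _ _ hM]
    have key : ∀ N M : ℕ, S (-(N:ℤ)) ^ s ≤ S (M:ℤ) ^ s + ENNReal.ofReal s * R := by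
      intro N M
      refine le_trans (tele N M (by omega)) ?_
      gcongr
      exact ENNReal.sum_le_tsum _
    have hsupT : T ≤ ⨆ N : ℕ, S (-(N:ℤ)) := by
      rw [hT_def, ENNReal.tsum_eq_iSup_sum]
      apply iSup_le
      intro F
      obtain ⟨U, hU⟩ := (F.image (fun k : ℤ => -k)).exists_le
      have hlow : ∀ k ∈ F, -(U.toNat : ℤ) ≤ k := by
        intro k hk
        have := hU (-k) (Finset.mem_image_of_mem _ hk)
        have h2 : U ≤ (U.toNat : ℤ) := Int.self_le_toNat U
        omega
      refine le_trans ?_ (le_iSup (fun N : ℕ => S (-(N:ℤ))) U.toNat)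
      rw [hS_def]
      calc ∑ k ∈ F, g k = ∑ k ∈ F, (if -(U.toNat:ℤ) ≤ k then g k else 0) := by
            apply Finset.sum_congr rfl
            intro k hk
            rw [if_pos (hlow k hk)]
        _ ≤ ∑' k, (if -(U.toNat:ℤ) ≤ k then g k else 0) := ENNReal.sum_le_tsum F
    have keyT : ∀ M : ℕ, T ^ s ≤ S (M:ℤ) ^ s + ENNReal.ofReal s * R := by
      intro M
      set C := S (M:ℤ) ^ s + ENNReal.ofReal s * R with hC
      have h1 : ∀ N : ℕ, S (-(N:ℤ)) ≤ C ^ (1/s) := by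
        intro N
        have := ENNReal.rpow_le_rpow (key N M) (by positivity : (0:ℝ) ≤ 1/s)
        rwa [← ENNReal.rpow_mul, mul_one_div, div_self hsne, ENNReal.rpow_one] at this
      have h2 : T ≤ C ^ (1/s) := le_trans hsupT (iSup_le h1)
      have := ENNReal.rpow_le_rpow h2 hs0.le
      rwa [← ENNReal.rpow_mul, one_div_mul_cancel hsne, ENNReal.rpow_one] at this
    -- now show ⨅ M, S M ^ s = 0
    set P : ℕ → ℝ≥0∞ := fun M => ∑ k ∈ Finset.Ico (0:ℤ) (M:ℤ), g k with hP_def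
    have hS0sum : ∀ M : ℕ, S 0 = P M + S (M:ℤ) := by
      intro M
      induction M with
      | zero => simp [hP_def]
      | succ M ih =>
        have hcast : ((M+1:ℕ):ℤ) = (M:ℤ)+1 := by push_cast; ring
        have hP1 : P (M+1) = P M + g (M:ℤ) := by
          show (∑ k ∈ Finset.Ico (0:ℤ) ((M+1:ℕ):ℤ), g k) = (∑ k ∈ Finset.Ico (0:ℤ) (M:ℤ), g k) + g (M:ℤ)
          rw [hcast, sum_Ico_succ_top_int _ _ (by omega)]
        rw [hP1, hcast, ih, hSucc (M:ℤ)]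
        ring
    have hPle : ∀ M, P M ≤ S 0 := fun M => (hS0sum M) ▸ le_self_add
    have hPfin : ∀ M, P M ≠ ∞ := fun M => ne_top_of_le_ne_top (hfin 0) (hPle M)
    have hsupP : ⨆ M : ℕ, P M = S 0 := by
      refine le_antisymm (iSup_le hPle) ?_
      show (∑' k', if (0:ℤ) ≤ k' then g k' else 0) ≤ ⨆ M : ℕ, P M
      rw [ENNReal.tsum_eq_iSup_sum]
      apply iSup_le
      intro F
      obtain ⟨U, hU⟩ := F.exists_le
      refine le_trans ?_ (le_iSup P (U.toNat + 1))
      rw [← Finset.sum_filter]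
      apply Finset.sum_le_sum_of_subset
      intro k hk
      simp only [Finset.mem_filter] at hk
      have h1 := hU k hk.1
      have h2 : U ≤ (U.toNat : ℤ) := Int.self_le_toNat U
      simp only [Finset.mem_Ico]
      refine ⟨hk.2, ?_⟩
      push_cast
      omega
    have hSM : ∀ M : ℕ, S (M:ℤ) = S 0 - P M := by
      intro M
      refine ENNReal.eq_sub_of_add_eq (hPfin M) ?_
      rw [add_comm, ← hS0sum M]
    have hinf : ⨅ M : ℕ, S (M:ℤ) = 0 := by
      calc ⨅ M : ℕ, S (M:ℤ) = ⨅ M : ℕ, (S 0 - P M) := by exact iInf_congr hSM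
        _ = S 0 - ⨆ M : ℕ, P M := (ENNReal.sub_iSup (hfin 0)).symm
        _ = 0 := by rw [hsupP, tsub_self]
    have hinfpow : ⨅ M : ℕ, S (M:ℤ) ^ s = 0 := by
      refine le_antisymm ?_ zero_le
      refine ENNReal.le_of_forall_pos_le_add ?_
      intro ε hε _
      rw [zero_add]
      have hεpos : (0:ℝ≥0∞) < (ε:ℝ≥0∞) ^ (1/s) :=
        ENNReal.rpow_pos (by exact_mod_cast hε) ENNReal.coe_ne_top
      have : ⨅ M : ℕ, S (M:ℤ) < (ε:ℝ≥0∞) ^ (1/s) := by rw [hinf]; exact hεpos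
      obtain ⟨M, hM⟩ := iInf_lt_iff.mp this
      refine le_trans (iInf_le _ M) ?_
      have := ENNReal.rpow_le_rpow hM.le hs0.le
      rwa [← ENNReal.rpow_mul, one_div_mul_cancel hsne, ENNReal.rpow_one] at this
    calc T ^ s ≤ ⨅ M : ℕ, (S (M:ℤ) ^ s + ENNReal.ofReal s * R) := le_iInf keyT
      _ = (⨅ M : ℕ, S (M:ℤ) ^ s) + ENNReal.ofReal s * R := ENNReal.iInf_add.symm
      _ = ENNReal.ofReal s * R := by rw [hinfpow, zero_add]
  · -- some S k₀ = ∞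
    push_neg at hfin
    obtain ⟨k₀, hk₀⟩ := hfin
    refine le_trans le_top ?_
    by_cases hgfin : ∀ j, g j ≠ ∞
    · have hall : ∀ k, k₀ ≤ k → S k = ∞ := by
        refine Int.le_induction ?_ ?_
        · exact hk₀
        · intro k hk ih
          have := hSucc k
          rw [ih] at this
          rcases ENNReal.add_eq_top.mp this.symm with h | h
          · exact absurd h (hgfin k)
          · exact h
      have hall' : ∀ k, S k = ∞ := by
        intro k
        rcases le_total k₀ k with h | h
        · exact hall k h
        · exact top_unique (hk₀ ▸ hSanti k k₀ h)
      have hT : T = ∞ := top_unique (hk₀ ▸ hTS k₀)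
      calc (⊤:ℝ≥0∞) = T := hT.symm
        _ = ∑' k, g k := hT_def
        _ ≤ ∑' k, g k * S k ^ (s-1) := by
            apply ENNReal.tsum_le_tsum
            intro k
            conv_lhs => rw [← mul_one (g k)]
            exact mul_le_mul_right (honeS k (hall' k)) _
        _ ≤ ENNReal.ofReal s * ∑' k, g k * S k ^ (s-1) :=
            le_mul_of_one_le_left zero_le hone
    · push_neg at hgfin
      obtain ⟨j, hj⟩ := hgfin
      have hSj : S j = ∞ := top_unique (hj ▸ hgS j)
      have hterm : g j * S j ^ (s-1) = ∞ := by
        rw [hj]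
        exact ENNReal.top_mul (by
          intro h0
          exact absurd (h0 ▸ honeS j hSj) (by simp))
      calc (⊤:ℝ≥0∞) = g j * S j ^ (s-1) := hterm.symm
        _ ≤ ∑' k, g k * S k ^ (s-1) := ENNReal.le_tsum j
        _ ≤ ENNReal.ofReal s * ∑' k, g k * S k ^ (s-1) :=
            le_mul_of_one_le_left zero_le hone

lemma mem_dCube (n : ℕ) (q : DIdx n) (x : Euc n) :
    x ∈ dCube n q ↔ ∀ i, q.2 i = ⌊(2:ℝ) ^ q.1 * x i⌋ := by
  unfold dCube
  simp only [Set.mem_setOf_eq]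
  refine forall_congr' fun i => ?_
  rw [eq_comm, Int.floor_eq_iff]

lemma dCube_subset (n : ℕ) (x : Euc n) (k k' : ℤ) (m m' : Fin n → ℤ)
    (hx : x ∈ dCube n (k, m)) (hx' : x ∈ dCube n (k', m')) (hkk' : k ≤ k') :
    dCube n (k', m') ⊆ dCube n (k, m) := by
  intro y hy
  rw [mem_dCube] at hx hx' hy ⊢
  intro i
  have hd : ((k' - k).toNat : ℤ) = k' - k := Int.toNat_of_nonneg (by omega)
  have hpow : ∀ t : ℝ, (2:ℝ) ^ ((k' - k).toNat) * ((2:ℝ) ^ k * t) = (2:ℝ) ^ k' * t := by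
    intro t
    have : (2:ℝ) ^ ((k' - k).toNat) = (2:ℝ) ^ ((k' - k : ℤ)) := by
      rw [← zpow_natCast, hd]
    rw [this, ← mul_assoc, ← zpow_add₀ (by norm_num : (2:ℝ) ≠ 0)]
    norm_num
  have key : ⌊(2:ℝ) ^ k * y i⌋ = ⌊(2:ℝ) ^ k * x i⌋ := by
    apply floor_scale' ((k' - k).toNat)
    rw [hpow, hpow, ← hx' i, ← hy i]
  rw [hx i, key]

/-- For `s ≥ 1`, every family `(λ_Q)` of nonnegative reals indexed by the
dyadic cubes of `ℝ^n` and every `x ∈ ℝ^n`,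
`(∑_Q λ_Q χ_Q(x))^s ≤ s ∑_Q λ_Q χ_Q(x) (∑_{Q' ⊆ Q} λ_{Q'} χ_{Q'}(x))^{s-1}`,
both sides taking values in `[0,∞]`. -/
theorem stmt0 (n : ℕ) (hn : 0 < n) (s : ℝ) (hs : 1 ≤ s)
    (Λ : DIdx n → ℝ≥0) (x : Euc n) :
    (∑' Q : DIdx n, (Λ Q : ℝ≥0∞) * ch n Q x) ^ s ≤
      ENNReal.ofReal s *
        ∑' Q : DIdx n, (Λ Q : ℝ≥0∞) * ch n Q x *
          (∑' Q' : DIdx n,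
              if dCube n Q' ⊆ dCube n Q then (Λ Q' : ℝ≥0∞) * ch n Q' x else 0) ^ (s - 1) := by
  have hs1 : (0:ℝ) ≤ s - 1 := by linarith
  set c : ℤ → DIdx n := fun k => (k, fun i => ⌊(2:ℝ) ^ k * x i⌋) with hc_def
  have hc_inj : Function.Injective c := fun a b h => congrArg Prod.fst h
  set g : ℤ → ℝ≥0∞ := fun k => (Λ (c k) : ℝ≥0∞) with hg_def
  have hxc : ∀ k, x ∈ dCube n (c k) := by
    intro k
    rw [mem_dCube]
    intro i
    rfl
  have hch1 : ∀ k, ch n (c k) x = 1 := by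
    intro k
    unfold ch
    rw [Set.indicator_of_mem (hxc k)]
    rfl
  have hch0 : ∀ q : DIdx n, x ∉ dCube n q → ch n q x = 0 := by
    intro q hq
    exact Set.indicator_of_notMem hq 1
  have hnot : ∀ (k : ℤ) (m : Fin n → ℤ), m ≠ (c k).2 → x ∉ dCube n (k, m) := by
    intro k m hm hx
    apply hm
    funext i
    exact (mem_dCube n (k, m) x).mp hx i
  have houter : ∀ f : DIdx n → ℝ≥0∞, (∀ q, x ∉ dCube n q → f q = 0) →
      ∑' q : DIdx n, f q = ∑' k : ℤ, f (c k) := by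
    intro f hf
    rw [ENNReal.tsum_prod']
    apply tsum_congr
    intro k
    apply tsum_eq_single ((c k).2)
    intro m hm
    exact hf (k, m) (hnot k m hm)
  have hsub : ∀ k k' : ℤ, k ≤ k' → dCube n (c k') ⊆ dCube n (c k) := by
    intro k k' h
    exact dCube_subset n x k k' _ _ (hxc k) (hxc k') h
  have hT : (∑' Q : DIdx n, (Λ Q : ℝ≥0∞) * ch n Q x) = ∑' k, g k := by
    rw [houter _ (fun q hq => by rw [hch0 q hq, mul_zero])]
    apply tsum_congr
    intro k
    rw [hch1 k, mul_one]
  have hinner : ∀ k : ℤ, (∑' k', if k ≤ k' then g k' else 0) ≤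
      ∑' Q' : DIdx n, if dCube n Q' ⊆ dCube n (c k) then (Λ Q' : ℝ≥0∞) * ch n Q' x else 0 := by
    intro k
    calc (∑' k', if k ≤ k' then g k' else 0)
        ≤ ∑' k', (if dCube n (c k') ⊆ dCube n (c k) then (Λ (c k') : ℝ≥0∞) * ch n (c k') x
            else 0) := by
          apply ENNReal.tsum_le_tsum
          intro k'
          by_cases h : k ≤ k'
          · rw [if_pos h, if_pos (hsub k k' h), hch1 k', mul_one]
          · rw [if_neg h]; exact zero_le
      _ ≤ _ := ENNReal.tsum_comp_le_tsum_of_injective hc_inj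
            (fun Q' => if dCube n Q' ⊆ dCube n (c k) then (Λ Q' : ℝ≥0∞) * ch n Q' x else 0)
  have hRHS : (∑' Q : DIdx n, (Λ Q : ℝ≥0∞) * ch n Q x *
      (∑' Q' : DIdx n, if dCube n Q' ⊆ dCube n Q then (Λ Q' : ℝ≥0∞) * ch n Q' x else 0) ^ (s-1))
      = ∑' k, g k * (∑' Q' : DIdx n,
          if dCube n Q' ⊆ dCube n (c k) then (Λ Q' : ℝ≥0∞) * ch n Q' x else 0) ^ (s-1) := by
    rw [houter _ (fun q hq => by rw [hch0 q hq, mul_zero, zero_mul])]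
    apply tsum_congr
    intro k
    rw [hch1 k, mul_one]
  calc (∑' Q : DIdx n, (Λ Q : ℝ≥0∞) * ch n Q x) ^ s
      = (∑' k, g k) ^ s := by rw [hT]
    _ ≤ ENNReal.ofReal s * ∑' k, g k * (∑' k', if k ≤ k' then g k' else 0) ^ (s-1) :=
        L2 s hs g
    _ ≤ ENNReal.ofReal s * ∑' k, g k * (∑' Q' : DIdx n,
          if dCube n Q' ⊆ dCube n (c k) then (Λ Q' : ℝ≥0∞) * ch n Q' x else 0) ^ (s-1) := by
        apply mul_le_mul_right
        apply ENNReal.tsum_le_tsum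
        intro k
        exact mul_le_mul_right (ENNReal.rpow_le_rpow (hinner k) hs1) _
    _ = _ := by rw [hRHS]
end
end

section
/- Let 0 < α < n and K(Q) = r_Q^{α−n} for Q ∈ 𝒟, and let σ be a locally finite positive Borel measure on ℝ^n. Suppose there exists C > 0 such that for every Q ∈ 𝒟 and every x ∈ Q, K̄(Q)(x) ≤ C r_Q^{α−n}. Then σ satisfies the dyadic reverse doubling condition DRD_γ with γ = n − α + log₂(1/C + 1) > n − α: there exists C'' > 0 such that σ(2^j Q) ≥ C'' 2^{jγ} σ(Q) for all j ≥ 0 and Q ∈ 𝒟, where 2^j Q is the unique dyadic cube containing Q with side length 2^j r_Q. -/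
open MeasureTheory ENNReal Set
open scoped Classical ENNReal NNReal

noncomputable section

lemma mem_dCube_iff {n : ℕ} {q : DIdx n} {x : Euc n} :
    x ∈ dCube n q ↔ ∀ i, ⌊(2:ℝ) ^ q.1 * x i⌋ = q.2 i := by
  unfold dCube
  simp only [Set.mem_setOf_eq]
  refine forall_congr' fun i => ?_
  rw [Int.floor_eq_iff]


def idxAt (n : ℕ) (k : ℤ) (x : Euc n) : DIdx n := (k, fun i => ⌊(2:ℝ) ^ k * x i⌋)

lemma mem_idxAt (n : ℕ) (k : ℤ) (x : Euc n) : x ∈ dCube n (idxAt n k x) := by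
  rw [mem_dCube_iff]; intro i; rfl

lemma eq_idxAt {n : ℕ} {q : DIdx n} {x : Euc n} (h : x ∈ dCube n q) : q = idxAt n q.1 x := by
  rw [mem_dCube_iff] at h
  exact Prod.ext rfl (by funext i; exact (h i).symm)

lemma floor_div_int (a : ℝ) (p : ℤ) (hp : 0 < p) : ⌊a / (p:ℝ)⌋ = ⌊a⌋ / p := by
  rw [Int.floor_eq_iff]
  have hp' : (0:ℝ) < (p:ℝ) := by exact_mod_cast hp
  constructor
  · rw [le_div_iff₀ hp']
    calc ((⌊a⌋ / p : ℤ) : ℝ) * p = ((⌊a⌋ / p * p : ℤ) : ℝ) := by push_cast; ring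
    _ ≤ (⌊a⌋ : ℝ) := by exact_mod_cast Int.ediv_mul_le ⌊a⌋ (ne_of_gt hp)
    _ ≤ a := Int.floor_le a
  · rw [div_lt_iff₀ hp']
    have h1 : a < (⌊a⌋ : ℝ) + 1 := Int.lt_floor_add_one a
    have h2 : ⌊a⌋ + 1 ≤ (⌊a⌋ / p) * p + p := by
      have := Int.emod_add_mul_ediv ⌊a⌋ p
      have := Int.emod_lt_of_pos ⌊a⌋ hp
      have := Int.emod_nonneg ⌊a⌋ (ne_of_gt hp)
      nlinarith
    calc a < (⌊a⌋ : ℝ) + 1 := h1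
    _ ≤ ((⌊a⌋ / p) * p + p : ℤ) := by exact_mod_cast h2
    _ = (((⌊a⌋ / p : ℤ) : ℝ) + 1) * p := by push_cast; ring

lemma dCube_subset_s6 {n : ℕ} (l l' : ℤ) (h : l ≤ l') (x : Euc n) :
    dCube n (idxAt n l' x) ⊆ dCube n (idxAt n l x) := by
  intro y hy
  rw [mem_dCube_iff] at hy ⊢
  intro i
  have hy' := hy i
  obtain ⟨d, hd⟩ := Int.le.dest h
  have h2d : (0:ℤ) < 2 ^ d := by positivity
  have hcast : (((2:ℤ) ^ d : ℤ) : ℝ) = (2:ℝ) ^ (d:ℤ) := by push_cast [zpow_natCast]; norm_num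
  have key : ∀ t : ℝ, (2:ℝ) ^ l * t = ((2:ℝ) ^ l' * t) / (((2:ℤ) ^ d : ℤ) : ℝ) := by
    intro t
    rw [hcast, _root_.eq_div_iff (by positivity)]
    rw [← hd, zpow_add₀ (by norm_num : (2:ℝ) ≠ 0)]
    ring
  show ⌊(2:ℝ) ^ l * y i⌋ = ⌊(2:ℝ) ^ l * x i⌋
  rw [key (y i), key (x i), floor_div_int _ _ h2d, floor_div_int _ _ h2d]
  have hy'' : ⌊(2:ℝ) ^ l' * y i⌋ = ⌊(2:ℝ) ^ l' * x i⌋ := hy i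
  rw [hy'']

lemma dCube_nonempty (n : ℕ) (q : DIdx n) : (dCube n q).Nonempty := by
  refine ⟨WithLp.toLp 2 (fun i => (q.2 i : ℝ) / (2:ℝ) ^ q.1 : Fin n → ℝ), fun i => ?_⟩
  simp only [PiLp.toLp_apply]
  have h2 : (0:ℝ) < (2:ℝ) ^ q.1 := by positivity
  have : (2:ℝ) ^ q.1 * ((q.2 i : ℝ) / (2:ℝ) ^ q.1) = (q.2 i : ℝ) := by field_simp
  constructor
  · rw [this]
  · rw [this]; linarith

lemma measure_dCube_lt_top (n : ℕ) (σ : Measure (Euc n)) [IsLocallyFiniteMeasure σ]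
    (q : DIdx n) : σ (dCube n q) < ∞ := by
  have h2 : (0:ℝ) < (2:ℝ) ^ q.1 := by positivity
  set S : Set (Euc n) := (EuclideanSpace.equiv (Fin n) ℝ).toHomeomorph ⁻¹'
    (Set.pi Set.univ fun i => Set.Icc ((q.2 i : ℝ) / (2:ℝ) ^ q.1) (((q.2 i : ℝ) + 1) / (2:ℝ) ^ q.1))
  have hS : IsCompact S :=
    (Homeomorph.isCompact_preimage _).2 (isCompact_univ_pi fun i => isCompact_Icc)
  have hsub : dCube n q ⊆ S := by
    intro x hx i _
    have := hx i
    show x i ∈ Set.Icc _ _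
    constructor
    · rw [div_le_iff₀ h2]; linarith [this.1]
    · rw [le_div_iff₀ h2]; linarith [this.2]
  exact lt_of_le_of_lt (measure_mono hsub) hS.measure_lt_top


/-- Let `0 < α < n`, `K(Q) = r_Q^{α-n}`, and suppose there is `C > 0` with
`K̄(Q)(x) ≤ C r_Q^{α-n}` for every dyadic `Q` and `x ∈ Q`. Then `σ` satisfies the dyadic
reverse doubling condition `DRD_γ` with `γ = n - α + log₂(1/C + 1) > n - α`: there is
`C'' > 0` such that `σ(2^j Q) ≥ C'' 2^{jγ} σ(Q)` for all `j ≥ 0` and `Q ∈ 𝒟`, where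
`2^j Q` is the (unique) dyadic cube containing `Q` with side length `2^j r_Q`. -/
theorem stmt6 (n : ℕ) (hn : 0 < n) (α : ℝ) (hα0 : 0 < α) (hαn : α < n)
    (σ : Measure (Euc n)) [IsLocallyFiniteMeasure σ] (C : ℝ) (hC : 0 < C)
    (hKbar : ∀ Q : DIdx n, ∀ x ∈ dCube n Q,
      Kbar n σ (fun q => ENNReal.ofReal ((sideLen n q) ^ (α - (n:ℝ)))) Q x ≤
        ENNReal.ofReal (C * (sideLen n Q) ^ (α - (n:ℝ)))) :
    (n:ℝ) - α < (n:ℝ) - α + Real.logb 2 (1 / C + 1) ∧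
      ∃ C'' : ℝ, 0 < C'' ∧
        ∀ (j : ℕ) (Q Q' : DIdx n), dCube n Q ⊆ dCube n Q' → Q'.1 = Q.1 - j →
          ENNReal.ofReal (C'' * 2 ^ ((j:ℝ) * ((n:ℝ) - α + Real.logb 2 (1 / C + 1)))) *
              σ (dCube n Q) ≤ σ (dCube n Q') := by
  have hlog : 0 < Real.logb 2 (1 / C + 1) :=
    Real.logb_pos (by norm_num) (by have := one_div_pos.2 hC; linarith)
  refine ⟨by linarith, 1 / C, by positivity, ?_⟩
  intro j Q Q' hsub hk
  by_cases hQ0 : σ (dCube n Q) = 0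
  · rw [hQ0, mul_zero]; exact zero_le
  obtain ⟨x, hx⟩ := dCube_nonempty n Q
  set w : ℝ := α - (n:ℝ) with hw
  have hw0 : w < 0 := by rw [hw]; linarith
  set Qi : ℕ → DIdx n := fun i => idxAt n (Q.1 - (i:ℤ)) x with hQidef
  have hQ0eq : Q = Qi 0 := by
    rw [hQidef]; simp only [Nat.cast_zero, sub_zero]; exact eq_idxAt hx
  have hQ'eq : Q' = Qi j := by
    rw [hQidef]; simp only; rw [← hk]; exact eq_idxAt (hsub hx)
  have hxi : ∀ i, x ∈ dCube n (Qi i) := fun i => mem_idxAt _ _ _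
  have hss : ∀ i m : ℕ, i ≤ m → dCube n (Qi i) ⊆ dCube n (Qi m) := by
    intro i m him
    rw [hQidef]
    exact dCube_subset_s6 (Q.1 - (m:ℤ)) (Q.1 - (i:ℤ)) (by omega) x
  have hfin : ∀ i : ℕ, σ (dCube n (Qi i)) ≠ ∞ := fun i => (measure_dCube_lt_top n σ _).ne
  have hσne : ∀ i : ℕ, σ (dCube n (Qi i)) ≠ 0 := by
    intro i h0
    exact hQ0 (measure_mono_null (hQ0eq ▸ hss 0 i (Nat.zero_le i)) h0)
  set f : ℕ → ℝ := fun i => (σ (dCube n (Qi i))).toReal with hf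
  have hfpos : ∀ i, 0 < f i := fun i => ENNReal.toReal_pos (hσne i) (hfin i)
  set c : ℕ → ℝ := fun i => ((2:ℝ) ^ ((i:ℤ) - Q.1)) ^ w with hc
  have hcpos : ∀ i, 0 < c i := fun i => Real.rpow_pos_of_pos (by positivity) w
  have hcrpow : ∀ i : ℕ, c i = (2:ℝ) ^ (((i:ℤ) - Q.1 : ℤ) * w : ℝ) := by
    intro i
    rw [hc]
    simp only
    rw [← Real.rpow_intCast 2 ((i:ℤ) - Q.1), ← Real.rpow_mul (by norm_num)]
  have hside : ∀ i : ℕ, sideLen n (Qi i) = (2:ℝ) ^ ((i:ℤ) - Q.1) := by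
    intro i
    show (2:ℝ) ^ (-(Q.1 - (i:ℤ))) = _
    rw [neg_sub]
  -- key inequality
  have key : ∀ m : ℕ,
      ∑ i ∈ Finset.range (m+1), c i * f i ≤ f m * (C * c m) := by
    intro m
    have hK := hKbar (Qi m) x (hxi m)
    rw [Kbar] at hK
    have hterm : ∀ i ∈ Finset.range (m+1),
        ENNReal.ofReal (c i) * σ (dCube n (Qi i)) =
        (if dCube n (Qi i) ⊆ dCube n (Qi m) then
          ENNReal.ofReal (sideLen n (Qi i) ^ (α - (n:ℝ))) * σ (dCube n (Qi i)) * ch n (Qi i) x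
        else 0) := by
      intro i hi
      rw [if_pos (hss i m (by simpa using Nat.lt_succ_iff.mp (Finset.mem_range.mp hi))),
        ch, Set.indicator_of_mem (hxi i), Pi.one_apply, mul_one, hside i, ← hw]
    have hinj : ∀ a ∈ Finset.range (m+1), ∀ b ∈ Finset.range (m+1), Qi a = Qi b → a = b := by
      intro a _ b _ hab
      have h1 : Q.1 - (a:ℤ) = Q.1 - (b:ℤ) := congrArg Prod.fst hab
      omega
    have hle1 : ∑ i ∈ Finset.range (m+1), ENNReal.ofReal (c i) * σ (dCube n (Qi i)) ≤
        ∑' q' : DIdx n, if dCube n q' ⊆ dCube n (Qi m) then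
          ENNReal.ofReal (sideLen n q' ^ (α - (n:ℝ))) * σ (dCube n q') * ch n q' x else 0 := by
      have h2 := ENNReal.sum_le_tsum
        (f := fun q' : DIdx n => if dCube n q' ⊆ dCube n (Qi m) then
          ENNReal.ofReal (sideLen n q' ^ (α - (n:ℝ))) * σ (dCube n q') * ch n q' x else 0)
        ((Finset.range (m+1)).image Qi)
      rw [Finset.sum_image hinj] at h2
      exact le_trans (le_of_eq (Finset.sum_congr rfl hterm)) h2
    have h3 : (∑' q' : DIdx n, if dCube n q' ⊆ dCube n (Qi m) then
          ENNReal.ofReal (sideLen n q' ^ (α - (n:ℝ))) * σ (dCube n q') * ch n q' x else 0) ≤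
        σ (dCube n (Qi m)) * ENNReal.ofReal (C * sideLen n (Qi m) ^ (α - (n:ℝ))) := by
      have h4 := mul_le_mul_right hK (σ (dCube n (Qi m)))
      rwa [← mul_assoc, ENNReal.mul_inv_cancel (hσne m) (hfin m), one_mul] at h4
    have h5 := hle1.trans h3
    have h6 := ENNReal.toReal_mono (ENNReal.mul_ne_top (hfin m) ENNReal.ofReal_ne_top) h5
    rw [ENNReal.toReal_sum (fun i _ => ENNReal.mul_ne_top ENNReal.ofReal_ne_top (hfin i)),
      ENNReal.toReal_mul, ENNReal.toReal_ofReal] at h6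
    · calc ∑ i ∈ Finset.range (m+1), c i * f i
          = ∑ i ∈ Finset.range (m+1), (ENNReal.ofReal (c i) * σ (dCube n (Qi i))).toReal := by
            refine Finset.sum_congr rfl fun i _ => ?_
            rw [ENNReal.toReal_mul, ENNReal.toReal_ofReal (hcpos i).le]
        _ ≤ (σ (dCube n (Qi m))).toReal * (C * sideLen n (Qi m) ^ (α - (n:ℝ))) := h6
        _ = f m * (C * c m) := by rw [hside m, ← hw]
    · have := hcpos m
      rw [hside m, ← hw] at *
      positivity
  -- iteration
  set T : ℕ → ℝ := fun m => ∑ i ∈ Finset.range (m+1), c i * f i with hT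
  have hTsucc : ∀ m : ℕ, T (m+1) = T m + c (m+1) * f (m+1) := by
    intro m
    rw [hT]
    exact Finset.sum_range_succ _ _
  have hstep : ∀ m : ℕ, (1/C + 1) * T m ≤ T (m+1) := by
    intro m
    have hkm := key (m+1)
    have h7 : T m / C ≤ c (m+1) * f (m+1) := by
      rw [div_le_iff₀ hC]
      nlinarith [hkm, mul_pos (hcpos (m+1)) (hfpos (m+1)), hTsucc m]
    have h8 := hTsucc m
    have h9 : T m / C = 1/C * T m := by ring
    nlinarith [h7, h9]
  have hiter : ∀ m : ℕ, (1/C + 1) ^ m * (c 0 * f 0) ≤ T m := by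
    intro m
    induction m with
    | zero =>
      rw [pow_zero, one_mul, hT]
      simp [Finset.sum_range_one]
    | succ m ih =>
      calc (1/C + 1) ^ (m+1) * (c 0 * f 0) = (1/C + 1) * ((1/C + 1) ^ m * (c 0 * f 0)) := by ring
        _ ≤ (1/C + 1) * T m := by
            have h10 : (0:ℝ) < 1/C + 1 := by positivity
            nlinarith [ih]
        _ ≤ T (m+1) := hstep m
  -- final bound
  have hbig : (1/C + 1) ^ j * (c 0 * f 0) ≤ f j * (C * c j) := (hiter j).trans (key j)
  have h2L : (2:ℝ) ^ Real.logb 2 (1/C + 1) = 1/C + 1 :=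
    Real.rpow_logb (by norm_num) (by norm_num) (by positivity)
  have h2jγ : (2:ℝ) ^ ((j:ℝ) * ((n:ℝ) - α + Real.logb 2 (1/C + 1))) =
      (1/C + 1) ^ j * (c 0 / c j) := by
    have e2 : c 0 / c j = (2:ℝ) ^ (-((j:ℝ) * w)) := by
      rw [hcrpow 0, hcrpow j, ← Real.rpow_sub (by norm_num)]
      congr 1
      push_cast
      ring
    have e3 : ((1:ℝ)/C + 1) ^ j = (2:ℝ) ^ ((j:ℝ) * Real.logb 2 (1/C + 1)) := by
      rw [mul_comm, Real.rpow_mul (by norm_num), h2L, Real.rpow_natCast]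
    rw [e2, e3, ← Real.rpow_add (by norm_num)]
    congr 1
    rw [hw]
    ring
  have final_real : 1/C * 2 ^ ((j:ℝ) * ((n:ℝ) - α + Real.logb 2 (1/C + 1))) * f 0 ≤ f j := by
    rw [h2jγ]
    have hrw : 1/C * ((1/C + 1) ^ j * (c 0 / c j)) * f 0 =
        ((1/C + 1) ^ j * (c 0 * f 0)) / (C * c j) := by
      field_simp
    rw [hrw, div_le_iff₀ (by positivity)]
    nlinarith [hbig]
  rw [hQ'eq, hQ0eq, ← ENNReal.ofReal_toReal (hfin j), ← ENNReal.ofReal_toReal (hfin 0),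
    ← ENNReal.ofReal_mul (by positivity)]
  exact ENNReal.ofReal_le_ofReal final_real
end
end
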